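/- For a finite-dimensional associative algebra 𝔄 over a field, the characteristic polynomial χ(λ,μ,F) = det(λA + μAᵀ) (with A the matrix of linear forms F(e_i e_j)) is divisible, as a polynomial in λ, μ with coefficients in polynomials on 𝔄*, by (λμ)^(dim ker A) · (λ+μ)^(ind 𝔄). -/

import Mathlib

open Matrix MvPolynomial Module

/-- Core divisibility lemma: if `M, N` are square matrices over a field `F` and `f : F →+* S`,
then `q ^ (dim ker M)` divides `det (p • M.map f + q • N.map f)`. -/
lemma core_dvd {F S : Type*} [Field F] [CommRing S] {n : ℕ}
    (M N : Matrix (Fin n) (Fin n) F) (f : F →+* S) (p q : S) :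
    q ^ (Module.finrank F (LinearMap.ker M.mulVecLin)) ∣
      (p • M.map f + q • N.map f).det := by
  classical
  set r := Module.finrank F (LinearMap.ker M.mulVecLin) with hr
  obtain ⟨W, hW⟩ := Submodule.exists_isCompl (LinearMap.ker M.mulVecLin)
  let bk : Basis (Fin r) F (LinearMap.ker M.mulVecLin) := Module.finBasis F _
  let bw : Basis (Fin (Module.finrank F W)) F W := Module.finBasis F W
  have hadd : r + Module.finrank F W = n := by
    have h1 := Submodule.finrank_add_eq_of_isCompl hW
    rwa [Module.finrank_fin_fun] at h1
  let e : (Fin r ⊕ Fin (Module.finrank F W)) ≃ Fin n :=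
    finSumFinEquiv.trans (finCongr hadd)
  let w : Basis (Fin n) F (Fin n → F) :=
    ((bk.prod bw).map
      (Submodule.prodEquivOfIsCompl _ _ hW)).reindex e
  have hwk : ∀ t : Fin r, w (e (Sum.inl t)) = (bk t : Fin n → F) := by
    intro t
    simp [w, Basis.reindex_apply, Basis.map_apply, Basis.prod_apply,
      Submodule.coe_prodEquivOfIsCompl]
  have hker : ∀ t : Fin r, M.mulVec (w (e (Sum.inl t))) = 0 := by
    intro t
    rw [hwk t]
    have := (bk t).2
    rwa [LinearMap.mem_ker, Matrix.mulVecLin_apply] at this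
  let Q : Matrix (Fin n) (Fin n) F := (Pi.basisFun F (Fin n)).toMatrix ⇑w
  have hQ : Invertible Q := (Pi.basisFun F (Fin n)).invertibleToMatrix w
  have hQdet : IsUnit Q.det := Matrix.isUnit_det_of_invertible Q
  have hQcol : ∀ l j, Q l j = w j l := by
    intro l j
    simp [Q, Basis.toMatrix_apply, Pi.basisFun_repr]
  let J : Finset (Fin n) := Finset.image (fun t => e (Sum.inl t)) Finset.univ
  have hJcard : J.card = r := by
    have hinj : Function.Injective (fun t : Fin r => e (Sum.inl t)) :=
      fun a b h => Sum.inl_injective (e.injective h)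
    rw [Finset.card_image_of_injective _ hinj, Finset.card_univ, Fintype.card_fin]
  have hMQ : ∀ i j, j ∈ J → (M * Q) i j = 0 := by
    intro i j hj
    obtain ⟨t, -, rfl⟩ := Finset.mem_image.mp hj
    have : (M * Q) i (e (Sum.inl t)) = M.mulVec (w (e (Sum.inl t))) i := by
      simp only [Matrix.mul_apply, Matrix.mulVec, dotProduct]
      refine Finset.sum_congr rfl fun l _ => by rw [hQcol]
    rw [this, hker t]
    rfl
  let B : Matrix (Fin n) (Fin n) S := Matrix.of fun i j =>
    if j ∈ J then (N * Q).map f i j else (p • (M * Q).map f + q • (N * Q).map f) i j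
  have key : (p • M.map f + q • N.map f) * Q.map f
      = Matrix.of (fun i j => (if j ∈ J then q else 1) * B i j) := by
    have h1 : (p • M.map f + q • N.map f) * Q.map f
        = p • (M * Q).map f + q • (N * Q).map f := by
      rw [Matrix.add_mul, Matrix.smul_mul, Matrix.smul_mul, Matrix.map_mul, Matrix.map_mul]
    rw [h1]
    ext i j
    by_cases hj : j ∈ J
    · simp only [Matrix.of_apply, hj, if_true, B, Matrix.add_apply, Matrix.smul_apply,
        Matrix.map_apply, smul_eq_mul, hMQ i j hj, map_zero, mul_zero, zero_add]
    · simp only [Matrix.of_apply, hj, if_false, B, one_mul]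
  have hdet : (p • M.map f + q • N.map f).det * f Q.det = q ^ r * B.det := by
    have hdetQ : (Q.map f).det = f Q.det := by
      rw [← RingHom.mapMatrix_apply, ← RingHom.map_det]
    rw [← hdetQ, ← Matrix.det_mul, key, Matrix.det_mul_row]
    congr 1
    rw [Finset.prod_ite_mem, Finset.univ_inter, Finset.prod_const, hJcard]
  have hdvd : q ^ r ∣ (p • M.map f + q • N.map f).det * f Q.det := ⟨B.det, hdet⟩
  exact (IsUnit.dvd_mul_right (hQdet.map f)).mp hdvd

lemma exists_preimage_mv {R F : Type*} [CommSemiring R] [CommSemiring F] (φ : R →+* F)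
    {σ : Type*} (e : MvPolynomial σ F) (h : ∀ s, ∃ a : R, φ a = e.coeff s) :
    ∃ e₀ : MvPolynomial σ R, MvPolynomial.map φ e₀ = e := by
  classical
  choose g hg using h
  refine ⟨∑ s ∈ e.support, monomial s (g s), ?_⟩
  rw [map_sum]
  simp only [map_monomial, hg]
  exact support_sum_monomial_coeff e

lemma descend_dvd {R F : Type*} [CommRing R] [IsDomain R] [Field F] [Algebra R F]
    [IsFractionRing R F] {σ : Type*} (π d : MvPolynomial σ R) (hπ : Prime π)
    (hπ0 : constantCoeff π = 0) (m : ℕ)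
    (h : (MvPolynomial.map (algebraMap R F) π) ^ m ∣ MvPolynomial.map (algebraMap R F) d) :
    π ^ m ∣ d := by
  classical
  obtain ⟨c, hc⟩ := h
  obtain ⟨b, hb⟩ := IsLocalization.exist_integer_multiples (nonZeroDivisors R) c.support
      (fun s => coeff s c)
  have h2 : ∀ s, ∃ a : R, algebraMap R F a = coeff s (C (algebraMap R F b) * c) := by
    intro s
    rw [coeff_C_mul]
    by_cases hs : s ∈ c.support
    · obtain ⟨a, ha⟩ := hb s hs
      rw [Algebra.smul_def] at ha
      exact ⟨a, ha⟩
    · exact ⟨0, by rw [MvPolynomial.notMem_support_iff.mp hs, mul_zero, map_zero]⟩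
  obtain ⟨c₀, hc₀⟩ := exists_preimage_mv (algebraMap R F) _ h2
  have hinj := MvPolynomial.map_injective (σ := σ) (algebraMap R F) (IsFractionRing.injective R F)
  have heq : C (b : R) * d = π ^ m * c₀ := by
    apply hinj
    rw [_root_.map_mul, _root_.map_mul, map_pow, hc₀, MvPolynomial.map_C, hc]
    ring
  have hbne : (b : R) ≠ 0 := nonZeroDivisors.ne_zero b.2
  have hnd : ¬ π ∣ C (b : R) := by
    rintro ⟨u, hu⟩
    have h3 := congrArg constantCoeff hu
    rw [constantCoeff_C, _root_.map_mul, hπ0, zero_mul] at h3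
    exact hbne h3
  exact hπ.pow_dvd_of_dvd_mul_left m hnd ⟨c₀, heq⟩

section Primes

variable {R : Type*} [CommRing R] [IsDomain R]

lemma prime_X0 : Prime (X 0 : MvPolynomial (Fin 2) R) := by
  rw [← MulEquiv.prime_iff (MvPolynomial.finSuccEquiv R 1).toMulEquiv]
  have : (MvPolynomial.finSuccEquiv R 1).toMulEquiv (X 0 : MvPolynomial (Fin 2) R)
      = Polynomial.X := finSuccEquiv_X_zero
  rw [this]
  exact Polynomial.prime_X

lemma prime_Xi (i : Fin 2) : Prime (X i : MvPolynomial (Fin 2) R) := by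
  have h := MulEquiv.prime_iff (renameEquiv R (Equiv.swap (0 : Fin 2) i)).toMulEquiv
    (p := (X 0 : MvPolynomial (Fin 2) R))
  have h2 : (renameEquiv R (Equiv.swap (0 : Fin 2) i)).toMulEquiv
      (X 0 : MvPolynomial (Fin 2) R) = X i := by
    show renameEquiv R (Equiv.swap (0 : Fin 2) i) (X 0) = X i
    simp [renameEquiv_apply, rename_X, Equiv.swap_apply_left]
  rw [h2] at h
  exact h.mpr prime_X0

noncomputable def shearEquiv : MvPolynomial (Fin 2) R ≃ₐ[R] MvPolynomial (Fin 2) R :=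
  AlgEquiv.ofAlgHom (aeval ![X 0, X 0 + X 1]) (aeval ![X 0, X 1 - X 0])
    (by apply MvPolynomial.algHom_ext; intro i; fin_cases i <;> simp)
    (by apply MvPolynomial.algHom_ext; intro i; fin_cases i <;> simp)

lemma prime_X0_add_X1 : Prime (X 0 + X 1 : MvPolynomial (Fin 2) R) := by
  have h := MulEquiv.prime_iff (shearEquiv (R := R)).toMulEquiv (p := (X 1 : MvPolynomial (Fin 2) R))
  have h2 : (shearEquiv (R := R)).toMulEquiv (X 1 : MvPolynomial (Fin 2) R) = X 0 + X 1 := by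
    show aeval ![X 0, X 0 + X 1] (X 1 : MvPolynomial (Fin 2) R) = X 0 + X 1
    simp
  rw [h2] at h
  exact h.mpr (prime_Xi 1)

end Primes


lemma main_aux {R F : Type*} [CommRing R] [IsDomain R] [Field F] [Algebra R F]
    [IsFractionRing R F] {n : ℕ} (Amat : Matrix (Fin n) (Fin n) R) (K indA : ℕ)
    (hK : K = Module.finrank F (LinearMap.ker (Amat.map (algebraMap R F)).mulVecLin))
    (hind : indA = Module.finrank F
      (LinearMap.ker ((Amat - Amatᵀ).map (algebraMap R F)).mulVecLin)) :
    ((X 0 : MvPolynomial (Fin 2) R) * X 1) ^ K * (X 0 + X 1) ^ indA ∣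
      Matrix.det ((X 0 : MvPolynomial (Fin 2) R) • Amat.map MvPolynomial.C
        + (X 1 : MvPolynomial (Fin 2) R) • Amatᵀ.map MvPolynomial.C) := by
  classical
  let φ : R →+* F := algebraMap R F
  let ψ : MvPolynomial (Fin 2) R →+* MvPolynomial (Fin 2) F := MvPolynomial.map φ
  let CF : F →+* MvPolynomial (Fin 2) F := MvPolynomial.C
  set A' : Matrix (Fin n) (Fin n) F := Amat.map (algebraMap R F) with hA'
  set Dm : Matrix (Fin n) (Fin n) (MvPolynomial (Fin 2) R) :=
    (X 0 : MvPolynomial (Fin 2) R) • Amat.map MvPolynomial.C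
      + (X 1 : MvPolynomial (Fin 2) R) • Amatᵀ.map MvPolynomial.C with hDm
  -- Step A : the image of the determinant under `ψ`
  have hψd : ψ Dm.det = ((X 0 : MvPolynomial (Fin 2) F) • A'.map ⇑CF
      + (X 1 : MvPolynomial (Fin 2) F) • A'ᵀ.map ⇑CF).det := by
    rw [RingHom.map_det]
    congr 1
    ext i j
    simp [Dm, hA', ψ, CF, φ, Matrix.map_apply, Matrix.add_apply, Matrix.smul_apply,
      smul_eq_mul, Matrix.transpose_apply]
  -- Step B : the three divisibilities over the fraction field
  have c1 : (X 1 : MvPolynomial (Fin 2) F) ^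
      (Module.finrank F (LinearMap.ker A'.mulVecLin)) ∣ ψ Dm.det := by
    rw [hψd]
    exact core_dvd A' A'ᵀ CF (X 0) (X 1)
  have c2 : (X 0 : MvPolynomial (Fin 2) F) ^
      (Module.finrank F (LinearMap.ker A'ᵀ.mulVecLin)) ∣ ψ Dm.det := by
    rw [hψd, add_comm]
    exact core_dvd A'ᵀ A' CF (X 1) (X 0)
  have c3 : ((X 0 : MvPolynomial (Fin 2) F) + X 1) ^
      (Module.finrank F (LinearMap.ker (A'ᵀ - A').mulVecLin)) ∣ ψ Dm.det := by
    have hmat : (X 1 : MvPolynomial (Fin 2) F) • (A'ᵀ - A').map ⇑CF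
        + ((X 0 : MvPolynomial (Fin 2) F) + X 1) • A'.map ⇑CF
        = (X 0 : MvPolynomial (Fin 2) F) • A'.map ⇑CF
          + (X 1 : MvPolynomial (Fin 2) F) • A'ᵀ.map ⇑CF := by
      ext i j
      have hsub : CF (A'ᵀ i j - A' i j) = CF (A'ᵀ i j) - CF (A' i j) :=
        RingHom.map_sub CF _ _
      simp only [Matrix.add_apply, Matrix.smul_apply, Matrix.map_apply, Matrix.sub_apply,
        smul_eq_mul, hsub]
      ring
    rw [hψd, ← hmat]
    exact core_dvd (A'ᵀ - A') A' CF (X 1) (X 0 + X 1)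
  -- Step C : identify the exponents
  have hKA : Module.finrank F (LinearMap.ker A'.mulVecLin) = K := hK.symm
  have hKAT : Module.finrank F (LinearMap.ker A'ᵀ.mulVecLin) = K := by
    have r1 := LinearMap.finrank_range_add_finrank_ker A'.mulVecLin
    have r2 := LinearMap.finrank_range_add_finrank_ker A'ᵀ.mulVecLin
    rw [Module.finrank_fin_fun] at r1 r2
    have ht : A'ᵀ.rank = A'.rank := Matrix.rank_transpose A'
    have e1 : A'.rank = Module.finrank F (LinearMap.range A'.mulVecLin) := rfl
    have e2 : A'ᵀ.rank = Module.finrank F (LinearMap.range A'ᵀ.mulVecLin) := rfl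
    rw [e1, e2] at ht
    omega
  have hind' : Module.finrank F (LinearMap.ker (A'ᵀ - A').mulVecLin) = indA := by
    have hmap : (Amat - Amatᵀ).map (algebraMap R F) = A' - A'ᵀ := by
      ext i j
      have : (algebraMap R F) (Amat i j - Amatᵀ i j)
          = algebraMap R F (Amat i j) - algebraMap R F (Amatᵀ i j) :=
        RingHom.map_sub _ _ _
      simp [hA', Matrix.map_apply, Matrix.sub_apply, this, Matrix.transpose_apply]
    have hker : LinearMap.ker (A'ᵀ - A').mulVecLin
        = LinearMap.ker (A' - A'ᵀ).mulVecLin := by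
      ext x
      simp [LinearMap.mem_ker, Matrix.mulVecLin_apply, Matrix.sub_mulVec, sub_eq_zero, eq_comm]
    rw [hker, ← hmap, ← hind]
  rw [hKA] at c1
  rw [hKAT] at c2
  rw [hind'] at c3
  -- Step D : descend the divisibilities to `MvPolynomial (Fin 2) R`
  have d1 : (X 0 : MvPolynomial (Fin 2) R) ^ K ∣ Dm.det := by
    refine descend_dvd (F := F) (X 0) Dm.det (prime_Xi 0) (by simp) K ?_
    rw [MvPolynomial.map_X]
    exact c2
  have d2 : (X 1 : MvPolynomial (Fin 2) R) ^ K ∣ Dm.det := by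
    refine descend_dvd (F := F) (X 1) Dm.det (prime_Xi 1) (by simp) K ?_
    rw [MvPolynomial.map_X]
    exact c1
  have d3 : ((X 0 : MvPolynomial (Fin 2) R) + X 1) ^ indA ∣ Dm.det := by
    refine descend_dvd (F := F) (X 0 + X 1) Dm.det prime_X0_add_X1 ?_ indA ?_
    · rw [RingHom.map_add, constantCoeff_X, constantCoeff_X, add_zero]
    · rw [RingHom.map_add, MvPolynomial.map_X, MvPolynomial.map_X]
      exact c3
  -- Step E : combine, using primality
  have nd10 : ¬ (X 1 : MvPolynomial (Fin 2) R) ∣ (X 0 : MvPolynomial (Fin 2) R) ^ K := by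
    intro hdv
    obtain ⟨u, hu⟩ := (prime_Xi 1).dvd_of_dvd_pow hdv
    have h3 := congrArg (aeval (![1, 0] : Fin 2 → R)) hu
    simp at h3
  have ndS : ¬ ((X 0 : MvPolynomial (Fin 2) R) + X 1) ∣
      (X 0 : MvPolynomial (Fin 2) R) ^ K * (X 1 : MvPolynomial (Fin 2) R) ^ K := by
    intro hdv
    rcases (prime_X0_add_X1.dvd_or_dvd hdv) with h | h
    · obtain ⟨u, hu⟩ := prime_X0_add_X1.dvd_of_dvd_pow h
      have h3 := congrArg (aeval (![1, -1] : Fin 2 → R)) hu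
      simp at h3
    · obtain ⟨u, hu⟩ := prime_X0_add_X1.dvd_of_dvd_pow h
      have h3 := congrArg (aeval (![-1, 1] : Fin 2 → R)) hu
      simp at h3
  obtain ⟨u, hu⟩ := d1
  have e2 : (X 1 : MvPolynomial (Fin 2) R) ^ K ∣ (X 0 : MvPolynomial (Fin 2) R) ^ K * u := by
    rw [← hu]; exact d2
  obtain ⟨v, hv⟩ := (prime_Xi 1).pow_dvd_of_dvd_mul_left K nd10 e2
  have e3 : ((X 0 : MvPolynomial (Fin 2) R) + X 1) ^ indA ∣
      ((X 0 : MvPolynomial (Fin 2) R) ^ K * (X 1 : MvPolynomial (Fin 2) R) ^ K) * v := by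
    rw [mul_assoc, ← hv, ← hu]; exact d3
  obtain ⟨t, ht⟩ := prime_X0_add_X1.pow_dvd_of_dvd_mul_left indA ndS e3
  refine ⟨t, ?_⟩
  rw [hu, hv, ht]
  ring

/-- The characteristic polynomial of a finite-dimensional associative algebra is divisible by
`(λμ)^(dim ker A) * (λ+μ)^(ind 𝔄)`, where `A` is the multiplication matrix over the field of
rational functions on `𝔄*` and `ind 𝔄 = dim ker (A - Aᵀ)` over that field. -/
theorem char_poly_divisibility {k 𝔄 : Type*} [Field k] [NonUnitalRing 𝔄] [Module k 𝔄]
    [SMulCommClass k 𝔄 𝔄] [IsScalarTower k 𝔄 𝔄] {n : ℕ} (b : Basis (Fin n) k 𝔄)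
    -- `Amat` : the multiplication matrix, with entries the linear forms `F ↦ F (b i * b j)`
    -- written as polynomials on `𝔄*` in the coordinates dual to `b`
    (Amat : Matrix (Fin n) (Fin n) (MvPolynomial (Fin n) k))
    (hAmat : ∀ i j, Amat i j = ∑ m, MvPolynomial.C (b.repr (b i * b j) m) * X m)
    (K indA : ℕ)
    (hK : K = Module.finrank (FractionRing (MvPolynomial (Fin n) k))
      (LinearMap.ker (Amat.map (algebraMap (MvPolynomial (Fin n) k)
        (FractionRing (MvPolynomial (Fin n) k)))).mulVecLin))
    (hind : indA = Module.finrank (FractionRing (MvPolynomial (Fin n) k))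
      (LinearMap.ker ((Amat - Amatᵀ).map (algebraMap (MvPolynomial (Fin n) k)
        (FractionRing (MvPolynomial (Fin n) k)))).mulVecLin)) :
    ((X 0 : MvPolynomial (Fin 2) (MvPolynomial (Fin n) k)) * X 1) ^ K * (X 0 + X 1) ^ indA ∣
      Matrix.det ((X 0 : MvPolynomial (Fin 2) (MvPolynomial (Fin n) k)) •
          Amat.map (MvPolynomial.C : _ → MvPolynomial (Fin 2) (MvPolynomial (Fin n) k))
        + (X 1 : MvPolynomial (Fin 2) (MvPolynomial (Fin n) k)) •
          Amatᵀ.map (MvPolynomial.C : _ → MvPolynomial (Fin 2) (MvPolynomial (Fin n) k))) :=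
  main_aux (F := FractionRing (MvPolynomial (Fin n) k)) Amat K indA hK hind
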